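/- arXiv:1204.4547 — 2 statements merged into one kernel-verified Lean document; each statement's English description precedes it below -/
import Mathlib

section
/- Let n ≥ 3 and let I be a nonempty proper nested subset of [n]. If D_I = {δ_1, δ_4} (i.e. exactly δ_1 and δ_4 among the four diagonals are proper), then either (a) u_1 < d_2 and I = {1, u_1}, or (b) d_{ℓ−1} < u_m and I = {u_m, n}; here d_2 is the second smallest element of D, d_{ℓ−1} the second largest element of D, u_1 = min U and u_m = max U. -/
open Finset

attribute [local instance] Classical.propDecidable

namespace AssocPaper

/-- `x` and `y` are consecutive elements of the finite set `S`. -/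
def ConsecIn (S : Finset ℕ) (x y : ℕ) : Prop :=
  x ∈ S ∧ y ∈ S ∧ x < y ∧ ∀ z ∈ S, ¬ (x < z ∧ z < y)

/-- `D̄ = D ∪ {0, n+1}`. -/
def Dbar (n : ℕ) (D : Finset ℕ) : Finset ℕ := insert 0 (insert (n + 1) D)

/-- The boundary edges of the `c`-labeled `(n+2)`-gon, given by endpoints `x < y`:
pairs of consecutive elements of `D̄`; if `U ≠ ∅` also `{0, min U}`, `{max U, n+1}` and
pairs of consecutive elements of `U`; if `U = ∅` also `{0, n+1}`. -/
def IsBoundary (n : ℕ) (D U : Finset ℕ) (x y : ℕ) : Prop :=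
  ConsecIn (Dbar n D) x y
    ∨ (U.Nonempty ∧
        ((x = 0 ∧ y ∈ U ∧ ∀ u ∈ U, y ≤ u)
          ∨ (y = n + 1 ∧ x ∈ U ∧ ∀ u ∈ U, u ≤ x)
          ∨ ConsecIn U x y))
    ∨ (U = ∅ ∧ x = 0 ∧ y = n + 1)

/-- `{x, y}` (with `x < y ≤ n+1`) is a proper diagonal: a diagonal of the
`(n+2)`-gon which is not a boundary edge. -/
def IsProper (n : ℕ) (D U : Finset ℕ) (x y : ℕ) : Prop :=
  x < y ∧ y ≤ n + 1 ∧ ¬ IsBoundary n D U x y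

/-- The set `R_δ` for a proper diagonal `δ = {x,y}` with `x < y`. -/
noncomputable def Rdiag (n : ℕ) (D U : Finset ℕ) (x y : ℕ) : Finset ℕ :=
  if x ∈ U then
    (if y ∈ U then (D ∪ U.filter fun u => u ≤ x) ∪ U.filter fun u => y ≤ u
     else D.filter (fun d => d < y) ∪ U.filter fun u => u ≤ x)
  else
    (if y ∈ U then D.filter (fun d => x < d) ∪ U.filter fun u => y ≤ u
     else D.filter fun d => x < d ∧ d < y)

/-- The extension of `R` to non-proper and degenerate diagonals `δ = {x,y}`, `x ≤ y`:
`R_δ = [n]` if `U = ∅` and `δ = {0,n+1}`; for other non-proper or degenerate `δ`,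
`R_δ = ∅` if `x,y ∈ D̄` and `R_δ = [n]` otherwise. -/
noncomputable def Rext (n : ℕ) (D U : Finset ℕ) (x y : ℕ) : Finset ℕ :=
  if IsProper n D U x y then Rdiag n D U x y
  else if U = ∅ ∧ x = 0 ∧ y = n + 1 then Finset.Icc 1 n
  else if x ∈ U ∨ y ∈ U then Finset.Icc 1 n
  else ∅

/-- The extension of the right-hand sides `z_{R_δ}` to non-proper and degenerate
diagonals, given the values `w` on proper diagonals and the value `zn = z_{[n]}`. -/
noncomputable def zext (n : ℕ) (D U : Finset ℕ) (w : ℕ × ℕ → ℝ) (zn : ℝ) (x y : ℕ) : ℝ :=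
  if IsProper n D U x y then w (x, y)
  else if U = ∅ ∧ x = 0 ∧ y = n + 1 then zn
  else if x ∈ U ∨ y ∈ U then zn
  else 0

/-- `a(I)`: the largest element of `D ∪ {0}` smaller than `min I`. -/
noncomputable def aI (D I : Finset ℕ) : ℕ :=
  ((insert 0 D).filter fun e => ∀ i ∈ I, e < i).sup id

/-- `b(I)`: the smallest element of `D ∪ {n+1}` larger than `max I`. -/
noncomputable def bI (n : ℕ) (D I : Finset ℕ) : ℕ :=
  sInf {e : ℕ | e ∈ insert (n + 1) D ∧ ∀ i ∈ I, i < e}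

/-- The minimum element `γ` of `I` (junk value for `I = ∅`). -/
noncomputable def minEl (I : Finset ℕ) : ℕ := sInf {i : ℕ | i ∈ I}

/-- The maximum element `Γ` of `I` (junk value `0` for `I = ∅`). -/
noncomputable def maxEl (I : Finset ℕ) : ℕ := I.sup id

/-- A nonempty `I ⊆ [n]` is nested if every `d ∈ D` with `a(I) < d < b(I)` lies in `I`. -/
def IsNested (n : ℕ) (D I : Finset ℕ) : Prop :=
  I.Nonempty ∧ I ⊆ Finset.Icc 1 n ∧
    ∀ d ∈ D, aI D I < d → d < bI n D I → d ∈ I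

/-- The nested components of `I`: the inclusion-maximal nested subsets of `I`. -/
noncomputable def nestedComponents (n : ℕ) (D I : Finset ℕ) : Finset (Finset ℕ) :=
  I.powerset.filter fun J =>
    IsNested n D J ∧ ∀ K ∈ I.powerset, IsNested n D K → J ⊆ K → J = K

/-- `v(I)`: the number of nested components of `I`. -/
noncomputable def vI (n : ℕ) (D I : Finset ℕ) : ℕ := (nestedComponents n D I).card

/-- `x` is the last element of one of the up intervals of `J`
(an element of `J ∩ U` whose successor in `U`, if any, is not in `J`). -/
def IsRunEnd (U J : Finset ℕ) (x : ℕ) : Prop :=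
  x ∈ J ∧ x ∈ U ∧ ∀ y, ConsecIn U x y → y ∉ J

/-- `y` is the first element of one of the up intervals of `J`
(an element of `J ∩ U` whose predecessor in `U`, if any, is not in `J`). -/
def IsRunStart (U J : Finset ℕ) (y : ℕ) : Prop :=
  y ∈ J ∧ y ∈ U ∧ ∀ x, ConsecIn U x y → x ∉ J

/-- `{x,y}` is one of the diagonals `δ_1(J), …, δ_{w+1}(J)` associated to a nested
set `J` with `a = a(J)`, `b = b(J)` and up intervals `[α_1,β_1]_U, …, [α_w,β_w]_U`,
namely `{a,α_1}, {β_1,α_2}, …, {β_w,b}` (and `{a,b}` when `w = 0`). -/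
def AssocDiag (n : ℕ) (D U J : Finset ℕ) (x y : ℕ) : Prop :=
  x < y ∧ (x = aI D J ∨ IsRunEnd U J x) ∧ (y = bI n D J ∨ IsRunStart U J y) ∧
    ∀ u ∈ J ∩ U, ¬ (x < u ∧ u < y)

/-- `W(J)`: the proper diagonals among the diagonals associated to the nested set `J`. -/
noncomputable def WJ (n : ℕ) (D U J : Finset ℕ) : Finset (ℕ × ℕ) :=
  (Finset.range (n + 2) ×ˢ Finset.range (n + 2)).filter fun p =>
    AssocDiag n D U J p.1 p.2 ∧ IsProper n D U p.1 p.2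

/-- The tight value `z^c_I = ∑_i ( ∑_{j ∈ W(J_i)} w_{δ_j(J_i)} − (|W(J_i)|−1)·z_{[n]} )`,
the sum running over the nested components `J_i` of `I` (so `z^c_∅ = 0`). -/
noncomputable def zc (n : ℕ) (D U : Finset ℕ) (w : ℕ × ℕ → ℝ) (zn : ℝ) (I : Finset ℕ) : ℝ :=
  ∑ J ∈ nestedComponents n D I,
    ((∑ p ∈ WJ n D U J, w p) - (((WJ n D U J).card : ℝ) - 1) * zn)

/-- The Minkowski coefficient `y_I = ∑_{J ⊆ I} (−1)^{|I∖J|} z^c_J`. -/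
noncomputable def yI (n : ℕ) (D U : Finset ℕ) (w : ℕ × ℕ → ℝ) (zn : ℝ) (I : Finset ℕ) : ℝ :=
  ∑ J ∈ I.powerset, (-1 : ℝ) ^ (I \ J).card * zc n D U w zn J

/-- The associahedron right-hand sides `w_δ = |R_δ|·(|R_δ|+1)/2`. -/
noncomputable def wAs (n : ℕ) (D U : Finset ℕ) (p : ℕ × ℕ) : ℝ :=
  (((Rdiag n D U p.1 p.2).card : ℝ) * (((Rdiag n D U p.1 p.2).card : ℝ) + 1)) / 2

/-- The associahedron value `z_{[n]} = n(n+1)/2`. -/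
noncomputable def znAs (n : ℕ) : ℝ := ((n : ℝ) * ((n : ℝ) + 1)) / 2


lemma minEl_mem {I : Finset ℕ} (h : I.Nonempty) : minEl I ∈ I := by
  have hne : {i : ℕ | i ∈ I}.Nonempty := ⟨h.choose, h.choose_spec⟩
  exact Nat.sInf_mem hne

lemma minEl_le {I : Finset ℕ} {i : ℕ} (hi : i ∈ I) : minEl I ≤ i :=
  Nat.sInf_le hi

lemma le_maxEl {I : Finset ℕ} {i : ℕ} (hi : i ∈ I) : i ≤ maxEl I :=
  Finset.le_sup (f := id) hi

lemma maxEl_mem {I : Finset ℕ} (h : I.Nonempty) : maxEl I ∈ I := by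
  obtain ⟨b, hb, he⟩ := Finset.exists_mem_eq_sup I h id
  rw [maxEl, he]; exact hb

lemma aI_spec {n : ℕ} {D I : Finset ℕ} (hsub : I ⊆ Finset.Icc 1 n) :
    aI D I ∈ insert 0 D ∧ ∀ i ∈ I, aI D I < i := by
  classical
  have h0 : (0 : ℕ) ∈ (insert 0 D).filter fun e => ∀ i ∈ I, e < i := by
    simp only [Finset.mem_filter, Finset.mem_insert]
    refine ⟨by simp, fun i hi => ?_⟩
    have := (Finset.mem_Icc.mp (hsub hi)).1; omega
  obtain ⟨e, he, hee⟩ := Finset.exists_mem_eq_sup _ ⟨0, h0⟩ (id : ℕ → ℕ)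
  rw [aI]
  rw [hee]
  simpa using Finset.mem_filter.mp he

lemma le_aI {D I : Finset ℕ} {e : ℕ} (he : e ∈ insert 0 D) (h : ∀ i ∈ I, e < i) :
    e ≤ aI D I := by
  classical
  exact Finset.le_sup (f := id) (Finset.mem_filter.mpr ⟨he, h⟩)

lemma bI_spec {n : ℕ} {D I : Finset ℕ} (hsub : I ⊆ Finset.Icc 1 n) :
    bI n D I ∈ insert (n + 1) D ∧ ∀ i ∈ I, i < bI n D I := by
  have hne : {e : ℕ | e ∈ insert (n + 1) D ∧ ∀ i ∈ I, i < e}.Nonempty :=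
    ⟨n + 1, by simp, fun i hi => by have := (Finset.mem_Icc.mp (hsub hi)).2; omega⟩
  exact Nat.sInf_mem hne

lemma bI_le {n : ℕ} {D I : Finset ℕ} {e : ℕ} (he : e ∈ insert (n + 1) D)
    (h : ∀ i ∈ I, i < e) : bI n D I ≤ e :=
  Nat.sInf_le ⟨he, h⟩

/-- for `n ≥ 3` and a nonempty proper nested `I ⊆ [n]`, if among
`δ_1, δ_2, δ_3, δ_4` exactly `δ_1` and `δ_4` are proper, then either
`u_1 < d_2` and `I = {1, u_1}`, or `d_{ℓ−1} < u_m` and `I = {u_m, n}`. -/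
theorem statement15 (n : ℕ) (D U : Finset ℕ) (hn : 3 ≤ n)
    (hDU : D ∪ U = Finset.Icc 1 n) (hdisj : Disjoint D U) (h1D : 1 ∈ D) (hnD : n ∈ D)
    (I : Finset ℕ) (hne : I.Nonempty) (hsub : I ⊆ Finset.Icc 1 n)
    (hpropersub : I ≠ Finset.Icc 1 n) (hnested : IsNested n D I)
    (h1 : IsProper n D U (aI D I) (bI n D I))
    (h2 : ¬ IsProper n D U (aI D I) (maxEl I))
    (h3 : ¬ IsProper n D U (minEl I) (bI n D I))
    (h4 : IsProper n D U (minEl I) (maxEl I)) :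
    (∃ u1, u1 ∈ U ∧ (∀ u ∈ U, u1 ≤ u) ∧ (∀ d ∈ D, 1 < d → u1 < d) ∧ I = {1, u1})
    ∨ (∃ um, um ∈ U ∧ (∀ u ∈ U, u ≤ um) ∧ (∀ d ∈ D, d < n → d < um) ∧ I = {um, n}) := by
  classical
  obtain ⟨haD, halt⟩ := aI_spec (D := D) hsub
  obtain ⟨hbD, hblt⟩ := bI_spec (D := D) hsub
  set a := aI D I with ha
  set b := bI n D I with hbdef
  set γ := minEl I with hγdef
  set Γ := maxEl I with hΓdef
  have hγI : γ ∈ I := minEl_mem hne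
  have hΓI : Γ ∈ I := maxEl_mem hne
  have hγn : 1 ≤ γ ∧ γ ≤ n := Finset.mem_Icc.mp (hsub hγI)
  have hΓn : 1 ≤ Γ ∧ Γ ≤ n := Finset.mem_Icc.mp (hsub hΓI)
  have haγ : a < γ := halt γ hγI
  have hΓb : Γ < b := hblt Γ hΓI
  have hγΓ : γ < Γ := h4.1
  have hUsub : U ⊆ Finset.Icc 1 n := by rw [← hDU]; exact Finset.subset_union_right
  have h0U : (0 : ℕ) ∉ U := fun h => by have := Finset.mem_Icc.mp (hUsub h); omega
  have haU : a ∉ U := by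
    rcases Finset.mem_insert.mp haD with h0 | hD
    · rw [h0]; exact h0U
    · exact fun h => Finset.disjoint_left.mp hdisj hD h
  have hbU : b ∉ U := by
    rcases Finset.mem_insert.mp hbD with h0 | hD
    · rw [h0]; exact fun h => by have := Finset.mem_Icc.mp (hUsub h); omega
    · exact fun h => Finset.disjoint_left.mp hdisj hD h
  -- δ₂ = {a, Γ} is a boundary edge
  have hbd2 : IsBoundary n D U a Γ := by
    by_contra hB
    exact h2 ⟨by omega, by omega, hB⟩
  -- δ₃ = {γ, b} is a boundary edge
  have hbD' : b ≤ n + 1 := by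
    rcases Finset.mem_insert.mp hbD with h0 | hD
    · omega
    · have hmem : b ∈ Finset.Icc 1 n := by rw [← hDU]; exact Finset.mem_union_left U hD
      have := Finset.mem_Icc.mp hmem
      omega
  have hbd3 : IsBoundary n D U γ b := by
    by_contra hB
    exact h3 ⟨by omega, hbD', hB⟩
  -- Case analysis for δ₂: either Γ ∈ D with a,Γ consecutive in D̄, or a = 0 ∧ Γ = min U
  have case2 : (Γ ∈ D ∧ ConsecIn (Dbar n D) a Γ) ∨ (a = 0 ∧ Γ ∈ U ∧ ∀ u ∈ U, Γ ≤ u) := by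
    rcases hbd2 with hcons | ⟨hUne, hc⟩ | ⟨hUe, ha0, hΓn1⟩
    · left
      refine ⟨?_, hcons⟩
      have := hcons.2.1
      simp only [Dbar, Finset.mem_insert] at this
      rcases this with h | h | h
      · omega
      · omega
      · exact h
    · rcases hc with ⟨ha0, hΓU, hmin⟩ | ⟨hΓn1, _⟩ | hconsU
      · exact Or.inr ⟨ha0, hΓU, hmin⟩
      · omega
      · exact absurd hconsU.1 haU
    · omega
  -- Case analysis for δ₃: either γ ∈ D with γ,b consecutive in D̄, or b = n+1 ∧ γ = max U
  have case3 : (γ ∈ D ∧ ConsecIn (Dbar n D) γ b) ∨ (b = n + 1 ∧ γ ∈ U ∧ ∀ u ∈ U, u ≤ γ) := by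
    rcases hbd3 with hcons | ⟨hUne, hc⟩ | ⟨hUe, hγ0, hbn1⟩
    · left
      refine ⟨?_, hcons⟩
      have := hcons.1
      simp only [Dbar, Finset.mem_insert] at this
      rcases this with h | h | h
      · omega
      · omega
      · exact h
    · rcases hc with ⟨hγ0, _⟩ | ⟨hbn1, hγU, hmax⟩ | hconsU
      · omega
      · exact Or.inr ⟨hbn1, hγU, hmax⟩
      · exact absurd hconsU.2.1 hbU
    · omega
  rcases case2 with ⟨hΓD, hcons2⟩ | ⟨ha0, hΓU, hΓmin⟩
  · rcases case3 with ⟨hγD, hcons3⟩ | ⟨hbn1, hγU, hγmax⟩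
    · -- both consecutive: γ ∈ D̄ strictly between a and Γ, contradiction
      exfalso
      have hγbar : γ ∈ Dbar n D := by simp [Dbar, hγD]
      exact hcons2.2.2.2 γ hγbar ⟨haγ, hγΓ⟩
    · -- case (b): b = n+1, γ = max U, Γ ∈ D consecutive with a in D̄
      right
      -- Γ = n
      have hΓeq : Γ = n := by
        by_contra hne'
        have hΓltn : Γ < n := by omega
        have : b ≤ n := bI_le (Finset.mem_insert.mpr (Or.inr hnD))
          (fun i hi => by
            have h1 := le_maxEl hi
            omega)
        omega
      refine ⟨γ, hγU, hγmax, ?_, ?_⟩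
      · -- ∀ d ∈ D, d < n → d < γ
        intro d hd hdn
        have hdbar : d ∈ Dbar n D := by simp [Dbar, hd]
        have := hcons2.2.2.2 d hdbar
        rw [hΓeq] at this
        by_contra hcon
        exact this ⟨by omega, hdn⟩
      · -- I = {γ, n}
        ext i
        simp only [Finset.mem_insert, Finset.mem_singleton]
        constructor
        · intro hi
          have h1 := minEl_le hi
          have h2' := le_maxEl hi
          rw [← hΓdef] at h2'
          rw [← hγdef] at h1
          by_contra hcon
          push_neg at hcon
          have hiγ : γ < i := lt_of_le_of_ne h1 (Ne.symm hcon.1)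
          have hin : i < n := lt_of_le_of_ne (hΓeq ▸ h2') hcon.2
          have hiIcc := Finset.mem_Icc.mp (hsub hi)
          have hiDU : i ∈ D ∪ U := by rw [hDU]; exact Finset.mem_Icc.mpr hiIcc
          rcases Finset.mem_union.mp hiDU with hiD | hiU
          · have hibar : i ∈ Dbar n D := by simp [Dbar, hiD]
            exact hcons2.2.2.2 i hibar ⟨by omega, by omega⟩
          · have := hγmax i hiU; omega
        · intro hi
          rcases hi with h | h
          · rw [h]; exact hγI
          · rw [h, ← hΓeq]; exact hΓI
  · rcases case3 with ⟨hγD, hcons3⟩ | ⟨hbn1, hγU, hγmax⟩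
    · -- case (a): a = 0, Γ = min U, γ ∈ D consecutive with b in D̄
      left
      -- γ = 1
      have hγeq : γ = 1 := by
        by_contra hne'
        have h1γ : 1 < γ := by omega
        have : (1 : ℕ) ≤ a := le_aI (Finset.mem_insert.mpr (Or.inr h1D))
          (fun i hi => by have := minEl_le hi; omega)
        omega
      refine ⟨Γ, hΓU, hΓmin, ?_, ?_⟩
      · -- ∀ d ∈ D, 1 < d → Γ < d
        intro d hd hd1
        have hdbar : d ∈ Dbar n D := by simp [Dbar, hd]
        have := hcons3.2.2.2 d hdbar
        rw [hγeq] at this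
        by_contra hcon
        exact this ⟨hd1, by omega⟩
      · -- I = {1, Γ}
        ext i
        simp only [Finset.mem_insert, Finset.mem_singleton]
        constructor
        · intro hi
          have h1 := minEl_le hi
          have h2' := le_maxEl hi
          rw [← hΓdef] at h2'
          rw [← hγdef] at h1
          by_contra hcon
          push_neg at hcon
          have h1i : 1 < i := lt_of_le_of_ne (hγeq ▸ h1) (Ne.symm hcon.1)
          have hiΓ : i < Γ := lt_of_le_of_ne h2' hcon.2
          have hiIcc := Finset.mem_Icc.mp (hsub hi)
          have hiDU : i ∈ D ∪ U := by rw [hDU]; exact Finset.mem_Icc.mpr hiIcc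
          rcases Finset.mem_union.mp hiDU with hiD | hiU
          · have hibar : i ∈ Dbar n D := by simp [Dbar, hiD]
            exact hcons3.2.2.2 i hibar ⟨by omega, by omega⟩
          · have := hΓmin i hiU; omega
        · intro hi
          rcases hi with h | h
          · rw [h, ← hγeq]; exact hγI
          · rw [h]; exact hΓI
    · -- a = 0 ∧ Γ = min U together with b = n+1 ∧ γ = max U: contradiction with γ < Γ
      exfalso
      have := hΓmin γ hγU
      omega

end AssocPaper
end

section
/- Let n ≥ 3 and let I be a nonempty proper nested subset of [n]. If D_I = {δ_1, δ_2, δ_4} (i.e. exactly δ_1, δ_2 and δ_4 among the four diagonals are proper), then one of the following holds: (a) there is 1 ≤ r ≤ ℓ−2 with d_r < u_m < d_{r+1} and I = {d ∈ D : d > d_r} ∪ {u_m}; (b) there is 1 < r < ℓ such that γ = d_r, b(I) = d_{r+1}, and I = {d_r} ∪ M for some nonempty M ⊆ {u ∈ U : d_r < u < d_{r+1}}; (c) γ = 1, b(I) = d_2, and I = {1} ∪ M for some nonempty M ⊆ {u ∈ U : u < d_2} with max M ≠ u_1 (i.e. u_1 < max M). -/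
open Finset

attribute [local instance] Classical.propDecidable

namespace AssocPaper

section Helpers18

variable {n : ℕ} {D U I : Finset ℕ}

lemma minEl_mem18 (h : I.Nonempty) : minEl I ∈ I := by
  have : {i : ℕ | i ∈ I}.Nonempty := ⟨h.choose, h.choose_spec⟩
  exact Nat.sInf_mem this

lemma minEl_le18 {i : ℕ} (hi : i ∈ I) : minEl I ≤ i := Nat.sInf_le hi

lemma le_maxEl18 {i : ℕ} (hi : i ∈ I) : i ≤ maxEl I := Finset.le_sup (f := id) hi

lemma maxEl_mem18 (h : I.Nonempty) : maxEl I ∈ I := by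
  obtain ⟨i, hi, he⟩ := Finset.exists_mem_eq_sup I h id
  rw [maxEl, he]; exact hi

lemma aI_mem18 (hsub : I ⊆ Finset.Icc 1 n) :
    aI D I ∈ (insert 0 D).filter fun e => ∀ i ∈ I, e < i := by
  have hne : ((insert 0 D).filter fun e => ∀ i ∈ I, e < i).Nonempty := by
    refine ⟨0, Finset.mem_filter.mpr ⟨Finset.mem_insert_self _ _, fun i hi => ?_⟩⟩
    exact lt_of_lt_of_le Nat.zero_lt_one (Finset.mem_Icc.mp (hsub hi)).1
  obtain ⟨e, he, hee⟩ := Finset.exists_mem_eq_sup _ hne id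
  rw [aI, hee]; exact he

lemma le_aI18 {e : ℕ} (he : e ∈ insert 0 D) (h : ∀ i ∈ I, e < i) : e ≤ aI D I :=
  Finset.le_sup (f := id) (Finset.mem_filter.mpr ⟨he, h⟩)

lemma bI_mem18 (hsub : I ⊆ Finset.Icc 1 n) :
    bI n D I ∈ insert (n + 1) D ∧ ∀ i ∈ I, i < bI n D I := by
  have hne : {e : ℕ | e ∈ insert (n + 1) D ∧ ∀ i ∈ I, i < e}.Nonempty := by
    refine ⟨n + 1, Finset.mem_insert_self _ _, fun i hi => ?_⟩
    exact lt_of_le_of_lt (Finset.mem_Icc.mp (hsub hi)).2 (Nat.lt_succ_self n)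
  exact Nat.sInf_mem hne

lemma bI_le18 {e : ℕ} (he : e ∈ insert (n + 1) D) (h : ∀ i ∈ I, i < e) :
    bI n D I ≤ e := Nat.sInf_le ⟨he, h⟩

lemma mem_Dbar18 {z : ℕ} (hz : z ∈ D) : z ∈ Dbar n D := by
  simp [Dbar, Finset.mem_insert, hz]

end Helpers18

/-- for `n ≥ 3` and a nonempty proper nested `I ⊆ [n]`, if among
`δ_1, δ_2, δ_3, δ_4` exactly `δ_1`, `δ_2` and `δ_4` are proper, then one of:
(a) there are consecutive `d < d'` in `D` with `d' < n` (i.e. `1 ≤ r ≤ ℓ−2`),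
`d < u_m < d'` and `I = {e ∈ D : e > d} ∪ {u_m}`;
(b) there are consecutive `d < d'` in `D` with `1 < d`, `γ = d`, `b(I) = d'` and
`I = {d} ∪ M` for nonempty `M ⊆ {u ∈ U : d < u < d'}`;
(c) `γ = 1`, `b(I) = d_2` (the successor of `1` in `D`) and `I = {1} ∪ M` for
nonempty `M ⊆ {u ∈ U : u < d_2}` with `u_1 < max M`. -/
theorem statement18 (n : ℕ) (D U : Finset ℕ) (hn : 3 ≤ n)
    (hDU : D ∪ U = Finset.Icc 1 n) (hdisj : Disjoint D U) (h1D : 1 ∈ D) (hnD : n ∈ D)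
    (I : Finset ℕ) (hne : I.Nonempty) (hsub : I ⊆ Finset.Icc 1 n)
    (hpropersub : I ≠ Finset.Icc 1 n) (hnested : IsNested n D I)
    (h1 : IsProper n D U (aI D I) (bI n D I))
    (h2 : IsProper n D U (aI D I) (maxEl I))
    (h3 : ¬ IsProper n D U (minEl I) (bI n D I))
    (h4 : IsProper n D U (minEl I) (maxEl I)) :
    (∃ d d' um, ConsecIn D d d' ∧ d' < n ∧ um ∈ U ∧ (∀ u ∈ U, u ≤ um) ∧
        d < um ∧ um < d' ∧ I = D.filter (fun e => d < e) ∪ {um})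
    ∨ (∃ d d', ConsecIn D d d' ∧ 1 < d ∧ minEl I = d ∧ bI n D I = d' ∧
        ∃ M, M ⊆ U.filter (fun u => d < u ∧ u < d') ∧ M.Nonempty ∧ I = insert d M)
    ∨ (∃ d2, ConsecIn D 1 d2 ∧ minEl I = 1 ∧ bI n D I = d2 ∧
        ∃ M, M ⊆ U.filter (fun u => u < d2) ∧ M.Nonempty ∧ I = insert 1 M ∧
          ∀ u1 ∈ U, (∀ u ∈ U, u1 ≤ u) → u1 < maxEl M) := by
  classical
  have hγI : minEl I ∈ I := minEl_mem18 hne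
  have hΓI : maxEl I ∈ I := maxEl_mem18 hne
  have hγ1 : 1 ≤ minEl I := (Finset.mem_Icc.mp (hsub hγI)).1
  have hΓn : maxEl I ≤ n := (Finset.mem_Icc.mp (hsub hΓI)).2
  have hI_le_n : ∀ i ∈ I, i ≤ n := fun i hi => (Finset.mem_Icc.mp (hsub hi)).2
  have haspec := aI_mem18 (D := D) hsub
  rw [Finset.mem_filter] at haspec
  have hamem : aI D I ∈ insert 0 D := haspec.1
  have halt : ∀ i ∈ I, aI D I < i := haspec.2
  have hbspec := bI_mem18 (D := D) hsub
  have hbmem : bI n D I ∈ insert (n + 1) D := hbspec.1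
  have hblt : ∀ i ∈ I, i < bI n D I := hbspec.2
  have hγb : minEl I < bI n D I := hblt _ hγI
  have hbn1 : bI n D I ≤ n + 1 :=
    bI_le18 (Finset.mem_insert_self _ _) fun i hi => lt_of_le_of_lt (hI_le_n i hi) (Nat.lt_succ_self n)
  have hγΓlt : minEl I < maxEl I := h4.1
  have hDsub : D ⊆ Finset.Icc 1 n := hDU ▸ Finset.subset_union_left
  have hUsub : U ⊆ Finset.Icc 1 n := hDU ▸ Finset.subset_union_right
  have hIDU : ∀ i ∈ I, i ∈ D ∨ i ∈ U := by
    intro i hi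
    have : i ∈ D ∪ U := hDU ▸ hsub hi
    exact Finset.mem_union.mp this
  have hbd : IsBoundary n D U (minEl I) (bI n D I) := by
    by_contra hB; exact h3 ⟨hγb, hbn1, hB⟩
  rcases hbd with hc | ⟨hUne, hcase⟩ | ⟨hUe, hγ0, _⟩
  · -- ConsecIn (Dbar n D) γ b
    have hγD : minEl I ∈ D := by
      have := hc.1
      simp only [Dbar, Finset.mem_insert] at this
      rcases this with h0 | h1 | h2
      · omega
      · have := lt_of_lt_of_le hγΓlt hΓn; omega
      · exact h2
    have hbD : bI n D I ∈ D := by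
      rcases Finset.mem_insert.mp hbmem with hb1 | hb2
      · exfalso
        have hnDbar : n ∈ Dbar n D := mem_Dbar18 hnD
        have hγn : minEl I < n := lt_of_lt_of_le hγΓlt hΓn
        exact hc.2.2.2 n hnDbar ⟨hγn, by omega⟩
      · exact hb2
    have hconsD : ConsecIn D (minEl I) (bI n D I) :=
      ⟨hγD, hbD, hγb, fun z hz => hc.2.2.2 z (mem_Dbar18 hz)⟩
    set M := I.filter (fun i => i ∈ U) with hM
    have hMU : ∀ u ∈ M, u ∈ U := fun u hu => (Finset.mem_filter.mp hu).2
    have hMI : M ⊆ I := Finset.filter_subset _ _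
    have hIeq : I = insert (minEl I) M := by
      apply Finset.ext
      intro i
      constructor
      · intro hi
        rcases hIDU i hi with hiD | hiU
        · have h1 : minEl I ≤ i := minEl_le18 hi
          have h2 : i < bI n D I := hblt i hi
          have : ¬(minEl I < i ∧ i < bI n D I) := hconsD.2.2.2 i hiD
          have : i = minEl I := by omega
          simp [this]
        · exact Finset.mem_insert.mpr (Or.inr (Finset.mem_filter.mpr ⟨hi, hiU⟩))
      · intro hi
        rcases Finset.mem_insert.mp hi with h | h
        · exact h ▸ hγI
        · exact hMI h
    have hΓM : maxEl I ∈ M := by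
      rcases hIDU _ hΓI with hD' | hU'
      · exfalso
        have : ¬(minEl I < maxEl I ∧ maxEl I < bI n D I) := hconsD.2.2.2 _ hD'
        exact this ⟨hγΓlt, hblt _ hΓI⟩
      · exact Finset.mem_filter.mpr ⟨hΓI, hU'⟩
    have hMne : M.Nonempty := ⟨_, hΓM⟩
    have hmaxM : maxEl M = maxEl I := by
      apply le_antisymm
      · exact Finset.sup_mono hMI
      · exact le_maxEl18 hΓM
    rcases Nat.lt_or_ge 1 (minEl I) with hγgt | hγle
    · -- case (b)
      refine Or.inr (Or.inl ⟨minEl I, bI n D I, hconsD, hγgt, rfl, rfl, M, ?_, hMne, hIeq⟩)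
      intro u hu
      refine Finset.mem_filter.mpr ⟨hMU u hu, ?_, hblt u (hMI hu)⟩
      have h1 : minEl I ≤ u := minEl_le18 (hMI hu)
      have : u ≠ minEl I := fun h => (Finset.disjoint_left.mp hdisj hγD) (h ▸ hMU u hu)
      omega
    · -- case (c): γ = 1
      have hγ1' : minEl I = 1 := le_antisymm hγle hγ1
      have ha0 : aI D I = 0 := by
        have := halt _ hγI
        omega
      refine Or.inr (Or.inr ⟨bI n D I, hγ1' ▸ hconsD, hγ1', rfl, M, ?_, hMne, hγ1' ▸ hIeq, ?_⟩)
      · intro u hu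
        exact Finset.mem_filter.mpr ⟨hMU u hu, hblt u (hMI hu)⟩
      · intro u1 hu1 hu1min
        by_contra hcon
        push_neg at hcon
        have hΓU : maxEl I ∈ U := hMU _ hΓM
        have hu1Γ : u1 = maxEl I := by
          have := hu1min _ hΓU
          rw [hmaxM] at hcon
          omega
        apply h2.2.2
        exact Or.inr (Or.inl ⟨⟨_, hΓU⟩, Or.inl ⟨ha0, hu1Γ ▸ hu1, fun u hu => hu1Γ ▸ hu1min u hu⟩⟩)
  · -- second boundary family
    rcases hcase with ⟨hγ0, _⟩ | ⟨hbn, hγU, hγmax⟩ | hcU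
    · omega
    · -- case (a)
      have hΓeq : maxEl I = n := by
        by_contra hne'
        have hΓlt : maxEl I < n := lt_of_le_of_ne hΓn hne'
        have : bI n D I ≤ n :=
          bI_le18 (Finset.mem_insert.mpr (Or.inr hnD))
            (fun i hi => lt_of_le_of_lt (le_maxEl18 hi) hΓlt)
        omega
      have hγgt1 : 1 < minEl I := by
        have : minEl I ≠ 1 := fun h => (Finset.disjoint_left.mp hdisj h1D) (h ▸ hγU)
        omega
      have haD : aI D I ∈ D := by
        have h1a : (1 : ℕ) ≤ aI D I :=
          le_aI18 (Finset.mem_insert.mpr (Or.inr h1D))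
            (fun i hi => lt_of_lt_of_le hγgt1 (minEl_le18 hi))
        rcases Finset.mem_insert.mp hamem with h | h
        · omega
        · exact h
      have hγn : minEl I < n := lt_of_lt_of_le hγΓlt (hΓeq.le)
      have hd'ne : {e : ℕ | e ∈ D ∧ minEl I < e}.Nonempty := ⟨n, hnD, hγn⟩
      set d' := sInf {e : ℕ | e ∈ D ∧ minEl I < e} with hd'
      have hd'mem : d' ∈ D ∧ minEl I < d' := Nat.sInf_mem hd'ne
      have hd'le : ∀ e ∈ D, minEl I < e → d' ≤ e := fun e he hlt => Nat.sInf_le ⟨he, hlt⟩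
      have haγ : aI D I < minEl I := halt _ hγI
      have hzsmall : ∀ z ∈ D, z < minEl I → z ≤ aI D I := fun z hz hlt =>
        le_aI18 (Finset.mem_insert.mpr (Or.inr hz))
          (fun i hi => lt_of_lt_of_le hlt (minEl_le18 hi))
      have hγnotD : minEl I ∉ D := fun h => (Finset.disjoint_left.mp hdisj h) hγU
      have hconsD : ConsecIn D (aI D I) d' := by
        refine ⟨haD, hd'mem.1, lt_trans haγ hd'mem.2, fun z hz hcon => ?_⟩
        rcases Nat.lt_trichotomy z (minEl I) with h | h | h
        · have := hzsmall z hz h; omega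
        · exact hγnotD (h ▸ hz)
        · have := hd'le z hz h; omega
      have hd'n : d' < n := by
        by_contra hcon
        push_neg at hcon
        have hd'n' : d' = n :=
          le_antisymm (Finset.mem_Icc.mp (hDsub hd'mem.1)).2 hcon
        apply h2.2.2
        left
        refine ⟨mem_Dbar18 haD, by rw [hΓeq]; exact mem_Dbar18 hnD, lt_trans haγ hγΓlt, ?_⟩
        intro z hz ⟨hz1, hz2⟩
        rw [hΓeq] at hz2
        simp only [Dbar, Finset.mem_insert] at hz
        rcases hz with h | h | h
        · omega
        · omega
        · rcases Nat.lt_trichotomy z (minEl I) with hh | hh | hh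
          · have := hzsmall z h hh; omega
          · exact hγnotD (hh ▸ h)
          · have := hd'le z h hh; omega
      refine Or.inl ⟨aI D I, d', minEl I, hconsD, hd'n, hγU, hγmax, haγ, hd'mem.2, ?_⟩
      apply Finset.ext
      intro i
      constructor
      · intro hi
        rcases hIDU i hi with hiD | hiU
        · exact Finset.mem_union.mpr (Or.inl (Finset.mem_filter.mpr ⟨hiD, halt i hi⟩))
        · have h1 : i ≤ minEl I := hγmax i hiU
          have h2 : minEl I ≤ i := minEl_le18 hi
          have : i = minEl I := le_antisymm h1 h2
          exact Finset.mem_union.mpr (Or.inr (Finset.mem_singleton.mpr this))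
      · intro hi
        rcases Finset.mem_union.mp hi with h | h
        · obtain ⟨hiD, hai⟩ := Finset.mem_filter.mp h
          refine hnested.2.2 i hiD hai ?_
          rw [hbn]
          exact lt_of_le_of_lt (Finset.mem_Icc.mp (hDsub hiD)).2 (Nat.lt_succ_self n)
        · exact (Finset.mem_singleton.mp h) ▸ hγI
    · -- ConsecIn U γ b : impossible
      exfalso
      have hbU : bI n D I ∈ U := hcU.2.1
      rcases Finset.mem_insert.mp hbmem with h | h
      · have := (Finset.mem_Icc.mp (hUsub hbU)).2; omega
      · exact (Finset.disjoint_left.mp hdisj h) hbU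
  · omega

end AssocPaper
end
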